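/- arXiv:2601.05700 — 3 statements merged into one kernel-verified Lean document; each statement's English description precedes it below -/
import Mathlib

section
/- Let n ≥ 1 and m ≥ 1. Let 𝒩 ⊆ ℝ^m be a nonempty compact set, let K : S^n → [0, ∞) be σ-integrable with ∫_{S^n} K dσ = 1, and let Φ : S^n → ℝ^m be σ-measurable with Φ(ξ) ∈ 𝒩 for σ-almost every ξ. Then dist(∫_{S^n} K(ξ)Φ(ξ) dσ(ξ), 𝒩) ≤ ∫_{S^n} ∫_{S^n} K(ξ)K(ζ)|Φ(ξ) − Φ(ζ)| dσ(ξ) dσ(ζ). -/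
open MeasureTheory
open scoped MeasureTheory

/-- Let `𝒩 ⊆ ℝᵐ` be nonempty compact, `K : Sⁿ → [0,∞)` σ-integrable with `∫ K dσ = 1`,
and `Φ : Sⁿ → ℝᵐ` σ-measurable with `Φ(ξ) ∈ 𝒩` σ-a.e.  Then
`dist(∫ K Φ dσ, 𝒩) ≤ ∫∫ K(ξ)K(ζ)|Φ(ξ) − Φ(ζ)| dσ(ξ) dσ(ζ)`. -/
theorem dist_of_average_le (n m : ℕ) (hn : 1 ≤ n) (hm : 1 ≤ m)
    (𝒩 : Set (EuclideanSpace ℝ (Fin m))) (h𝒩ne : 𝒩.Nonempty) (h𝒩c : IsCompact 𝒩)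
    (K : EuclideanSpace ℝ (Fin (n + 1)) → ℝ)
    (Φ : EuclideanSpace ℝ (Fin (n + 1)) → EuclideanSpace ℝ (Fin m))
    (hK0 : ∀ ξ ∈ Metric.sphere (0 : EuclideanSpace ℝ (Fin (n + 1))) 1, 0 ≤ K ξ)
    (hKint : IntegrableOn K (Metric.sphere (0 : EuclideanSpace ℝ (Fin (n + 1))) 1) μH[(n : ℝ)])
    (hK1 : (∫ ξ in Metric.sphere (0 : EuclideanSpace ℝ (Fin (n + 1))) 1, K ξ ∂μH[(n : ℝ)]) = 1)
    (hΦm : AEStronglyMeasurable Φ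
      (μH[(n : ℝ)].restrict (Metric.sphere (0 : EuclideanSpace ℝ (Fin (n + 1))) 1)))
    (hΦ𝒩 : ∀ᵐ ξ ∂(μH[(n : ℝ)].restrict (Metric.sphere (0 : EuclideanSpace ℝ (Fin (n + 1))) 1)),
      Φ ξ ∈ 𝒩) :
    Metric.infDist
        (∫ ξ in Metric.sphere (0 : EuclideanSpace ℝ (Fin (n + 1))) 1, K ξ • Φ ξ ∂μH[(n : ℝ)]) 𝒩
      ≤ ∫ ξ in Metric.sphere (0 : EuclideanSpace ℝ (Fin (n + 1))) 1,
          ∫ ζ in Metric.sphere (0 : EuclideanSpace ℝ (Fin (n + 1))) 1,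
            K ξ * K ζ * ‖Φ ξ - Φ ζ‖ ∂μH[(n : ℝ)] ∂μH[(n : ℝ)] := by
  set μ := μH[(n : ℝ)].restrict (Metric.sphere (0 : EuclideanSpace ℝ (Fin (n + 1))) 1) with hμdef
  have hmemae : ∀ᵐ ξ ∂μ, ξ ∈ Metric.sphere (0 : EuclideanSpace ℝ (Fin (n + 1))) 1 :=
    ae_restrict_mem Metric.isClosed_sphere.measurableSet
  have hKae : ∀ᵐ ξ ∂μ, 0 ≤ K ξ := hmemae.mono fun ξ h => hK0 ξ h
  have hKμ : Integrable K μ := hKint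
  have hKm := hKμ.aestronglyMeasurable
  obtain ⟨C, hC⟩ := h𝒩c.isBounded.exists_norm_le
  have hC0 : 0 ≤ C := h𝒩ne.elim fun y hy => le_trans (norm_nonneg y) (hC y hy)
  have hΦb : ∀ᵐ ξ ∂μ, ‖Φ ξ‖ ≤ C := hΦ𝒩.mono fun ξ h => hC _ h
  have hΦtop : MemLp Φ ⊤ μ := memLp_top_of_bound hΦm C hΦb
  have hKΦ : Integrable (fun ξ => K ξ • Φ ξ) μ := hKμ.smul_of_top_left hΦtop
  set c := ∫ ξ, K ξ • Φ ξ ∂μ with hc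
  set I := ∫ ξ, ‖K ξ‖ ∂μ with hI
  set G : EuclideanSpace ℝ (Fin m) → ℝ := fun y => ∫ ζ, K ζ * ‖y - Φ ζ‖ ∂μ with hG
  have hint : ∀ y, Integrable (fun ζ => K ζ * ‖y - Φ ζ‖) μ := by
    intro y
    refine Integrable.mono' (hKμ.norm.mul_const (‖y‖ + C)) (hKm.mul
      ((aestronglyMeasurable_const.sub hΦm).norm)) ?_
    filter_upwards [hΦb] with ζ hb
    rw [Real.norm_eq_abs, abs_mul, abs_norm]
    exact mul_le_mul_of_nonneg_left (le_trans (norm_sub_le _ _) (by linarith))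
      (abs_nonneg _)
  have hGdiff : ∀ y y', G y - G y' ≤ I * ‖y - y'‖ := by
    intro y y'
    rw [hG]
    simp only
    rw [← integral_sub (hint y) (hint y'), ← integral_mul_const]
    refine integral_mono ((hint y).sub (hint y')) (hKμ.norm.mul_const _) fun ζ => ?_
    have h1 : ‖y - Φ ζ‖ - ‖y' - Φ ζ‖ ≤ ‖y - y'‖ := by
      have := norm_sub_norm_le (y - Φ ζ) (y' - Φ ζ)
      simpa [sub_sub_sub_cancel_right] using this
    calc K ζ * ‖y - Φ ζ‖ - K ζ * ‖y' - Φ ζ‖ = K ζ * (‖y - Φ ζ‖ - ‖y' - Φ ζ‖) := by ring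
      _ ≤ |K ζ| * ‖y - y'‖ := by
          have habs : |‖y - Φ ζ‖ - ‖y' - Φ ζ‖| ≤ ‖y - y'‖ := by
            have := abs_norm_sub_norm_le (y - Φ ζ) (y' - Φ ζ)
            simpa [sub_sub_sub_cancel_right] using this
          calc K ζ * (‖y - Φ ζ‖ - ‖y' - Φ ζ‖)
              ≤ |K ζ * (‖y - Φ ζ‖ - ‖y' - Φ ζ‖)| := le_abs_self _
            _ = |K ζ| * |‖y - Φ ζ‖ - ‖y' - Φ ζ‖| := abs_mul _ _
            _ ≤ |K ζ| * ‖y - y'‖ := mul_le_mul_of_nonneg_left habs (abs_nonneg _)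
      _ = ‖K ζ‖ * ‖y - y'‖ := by rw [Real.norm_eq_abs]
  have hGcont : Continuous G := by
    have hI0 : 0 ≤ I := integral_nonneg fun ζ => norm_nonneg _
    refine (LipschitzWith.of_dist_le_mul (K := I.toNNReal) (f := G) fun y y' => ?_).continuous
    have h2 := hGdiff y y'
    have h3 := hGdiff y' y
    rw [norm_sub_rev] at h3
    rw [Real.dist_eq, dist_eq_norm, abs_sub_le_iff, Real.coe_toNNReal I hI0]
    constructor <;> linarith [h2, h3]
  have hGm : AEStronglyMeasurable (fun ξ => G (Φ ξ)) μ :=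
    hGcont.comp_aestronglyMeasurable hΦm
  have hGb : ∀ y, ‖y‖ ≤ C → |G y| ≤ 2 * C * I := by
    intro y hy
    have h1 : |G y| ≤ ∫ ζ, ‖K ζ * ‖y - Φ ζ‖‖ ∂μ := by
      rw [← Real.norm_eq_abs]; exact norm_integral_le_integral_norm _
    refine h1.trans ?_
    rw [hI, ← integral_const_mul]
    refine integral_mono_ae (hint y).norm (hKμ.norm.const_mul _) ?_
    filter_upwards [hΦb] with ζ hb
    rw [Real.norm_eq_abs, abs_mul, abs_norm, Real.norm_eq_abs]
    have hsub : ‖y - Φ ζ‖ ≤ 2 * C := le_trans (norm_sub_le _ _) (by linarith)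
    calc |K ζ| * ‖y - Φ ζ‖ ≤ |K ζ| * (2 * C) := mul_le_mul_of_nonneg_left hsub (abs_nonneg _)
      _ = 2 * C * |K ζ| := by ring
  have hRHSint : Integrable (fun ξ => K ξ * G (Φ ξ)) μ := by
    refine Integrable.mono' (hKμ.norm.mul_const (2 * C * I)) (hKm.mul hGm) ?_
    filter_upwards [hΦb] with ξ hb
    rw [Real.norm_eq_abs, abs_mul, Real.norm_eq_abs]
    exact mul_le_mul_of_nonneg_left (hGb _ hb) (abs_nonneg _)
  have hK1' : ∫ ξ, K ξ ∂μ = 1 := hK1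
  have hptwise : ∀ᵐ ξ ∂μ, K ξ * Metric.infDist c 𝒩 ≤ K ξ * G (Φ ξ) := by
    filter_upwards [hKae, hΦ𝒩] with ξ hKξ hΦξ
    refine mul_le_mul_of_nonneg_left ?_ hKξ
    have h1 : Metric.infDist c 𝒩 ≤ ‖c - Φ ξ‖ := by
      rw [← dist_eq_norm]
      exact Metric.infDist_le_dist_of_mem hΦξ
    refine h1.trans ?_
    have h2 : c - Φ ξ = ∫ ζ, (K ζ • Φ ζ - K ζ • Φ ξ) ∂μ := by
      rw [integral_sub hKΦ (hKμ.smul_const (Φ ξ)), integral_smul_const, hK1', one_smul]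
    rw [h2]
    refine (norm_integral_le_integral_norm _).trans_eq ?_
    refine integral_congr_ae ?_
    filter_upwards [hKae] with ζ hKζ
    rw [← smul_sub, norm_smul, Real.norm_eq_abs, abs_of_nonneg hKζ, norm_sub_rev]
  calc Metric.infDist c 𝒩 = ∫ ξ, K ξ * Metric.infDist c 𝒩 ∂μ := by
        rw [integral_mul_const, hK1', one_mul]
    _ ≤ ∫ ξ, K ξ * G (Φ ξ) ∂μ := integral_mono_ae (hKμ.mul_const _) hRHSint hptwise
    _ = ∫ ξ, ∫ ζ, K ξ * K ζ * ‖Φ ξ - Φ ζ‖ ∂μ ∂μ := by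
        refine integral_congr_ae (Filter.Eventually.of_forall fun ξ => ?_)
        simp_rw [mul_assoc, integral_const_mul]
        rfl
end

section
/- Let n ≥ 2 and m ≥ 1. Let 𝒩 ⊆ ℝ^m be a nonempty compact set, let K : S^n → [0, ∞) satisfy ∫_{S^n} K dσ = 1 and K ∈ L^{n/(n−1)}(S^n, σ), and let Φ : S^n → ℝ^m be σ-measurable with Φ(ξ) ∈ 𝒩 for σ-almost every ξ.isThen dist(∫_{S^n} K(ξ)Φ(ξ) dσ(ξ), 𝒩) ≤ ‖K‖²_{L^{n/(n−1)}(S^n)} · ( ∫_{S^n} ∫_{S^n} |Φ(ξ) − Φ(ζ)|^n dσ(ξ) dσ(ζ) )^{1/n}. -/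
open MeasureTheory Module
open scoped MeasureTheory ENNReal

lemma normalize_lipschitzOnWith {E : Type*} [NormedAddCommGroup E] [NormedSpace ℝ E] :
    LipschitzOnWith 2 (fun x : E => ‖x‖⁻¹ • x) {x : E | 1 ≤ ‖x‖} := by
  apply LipschitzOnWith.of_dist_le_mul
  intro x hx y hy
  simp only [Set.mem_setOf_eq] at hx hy
  have hx0 : 0 < ‖x‖ := lt_of_lt_of_le one_pos hx
  have hy0 : 0 < ‖y‖ := lt_of_lt_of_le one_pos hy
  rw [dist_eq_norm, dist_eq_norm]
  have hdecomp : ‖x‖⁻¹ • x - ‖y‖⁻¹ • y = ‖x‖⁻¹ • (x - y) + (‖x‖⁻¹ - ‖y‖⁻¹) • y := by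
    rw [smul_sub, sub_smul]; abel
  rw [hdecomp]
  have h1 : ‖‖x‖⁻¹ • (x - y)‖ ≤ ‖x - y‖ := by
    rw [norm_smul, norm_inv, norm_norm]
    calc ‖x‖⁻¹ * ‖x - y‖ ≤ 1 * ‖x - y‖ := by
          apply mul_le_mul_of_nonneg_right _ (norm_nonneg _)
          exact inv_le_one_of_one_le₀ hx
      _ = ‖x - y‖ := one_mul _
  have h2 : ‖(‖x‖⁻¹ - ‖y‖⁻¹) • y‖ ≤ ‖x - y‖ := by
    rw [norm_smul, Real.norm_eq_abs]
    have : ‖x‖⁻¹ - ‖y‖⁻¹ = (‖y‖ - ‖x‖) / (‖x‖ * ‖y‖) := by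
      field_simp
    rw [this, abs_div, abs_of_pos (mul_pos hx0 hy0), div_mul_eq_mul_div]
    rw [mul_comm ‖x‖ ‖y‖, mul_div_assoc]
    have hxy : |‖y‖ - ‖x‖| ≤ ‖x - y‖ := by
      rw [abs_sub_comm]
      exact (abs_norm_sub_norm_le x y).trans le_rfl
    calc |‖y‖ - ‖x‖| * (‖y‖ / (‖y‖ * ‖x‖)) ≤ ‖x - y‖ * 1 := by
          apply mul_le_mul hxy _ (by positivity) (norm_nonneg _)
          rw [div_le_one (by positivity)]
          nlinarith
      _ = ‖x - y‖ := mul_one _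
  refine (norm_add_le _ _).trans ?_
  refine (add_le_add h1 h2).trans_eq ?_
  push_cast
  ring

lemma euclidean_abs_coord_le_norm {N : ℕ} (x : EuclideanSpace ℝ (Fin N)) (i : Fin N) :
    |x i| ≤ ‖x‖ := by
  rw [EuclideanSpace.norm_eq]
  rw [show |x i| = Real.sqrt (|x i| ^ 2) by rw [Real.sqrt_sq_eq_abs, abs_abs]]
  apply Real.sqrt_le_sqrt
  simp only [Real.norm_eq_abs]
  exact Finset.single_le_sum (fun j _ => sq_nonneg |x j|) (Finset.mem_univ i)

lemma insertNth_isometry (n : ℕ) (i : Fin (n + 1)) (c : ℝ) :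
    Isometry (fun y : EuclideanSpace ℝ (Fin n) =>
      ((WithLp.equiv 2 (Fin (n + 1) → ℝ)).symm (i.insertNth c y))) := by
  apply Isometry.of_dist_eq
  intro y z
  rw [EuclideanSpace.dist_eq, EuclideanSpace.dist_eq]
  congr 1
  rw [Fin.sum_univ_succAbove (fun j => dist ((WithLp.equiv 2 (Fin (n+1) → ℝ)).symm
      (i.insertNth c y) j) ((WithLp.equiv 2 (Fin (n+1) → ℝ)).symm (i.insertNth c z) j) ^ 2) i]
  simp [Fin.insertNth_apply_same, Fin.insertNth_apply_succAbove,
    WithLp.equiv_symm_apply, PiLp.toLp_apply]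

lemma hausdorff_closedBall_lt_top (n : ℕ) (R : ℝ) :
    μH[(n : ℝ)] (Metric.closedBall (0 : EuclideanSpace ℝ (Fin n)) R) < ⊤ := by
  have h : IsFiniteMeasureOnCompacts (μH[(n : ℝ)] : Measure (EuclideanSpace ℝ (Fin n))) := by
    have h2 := MeasureTheory.isAddHaarMeasure_hausdorffMeasure
      (E := EuclideanSpace ℝ (Fin n))
    have hr : ((finrank ℝ (EuclideanSpace ℝ (Fin n)) : ℕ) : ℝ) = (n : ℝ) := by
      simp [finrank_euclideanSpace_fin]
    rw [hr] at h2
    exact h2.toIsFiniteMeasureOnCompacts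
  exact (isCompact_closedBall _ _).measure_lt_top

lemma hausdorff_sphere_lt_top (n : ℕ) :
    μH[(n : ℝ)] (Metric.sphere (0 : EuclideanSpace ℝ (Fin (n + 1))) 1) < ⊤ := by
  classical
  set r : EuclideanSpace ℝ (Fin (n + 1)) → EuclideanSpace ℝ (Fin (n + 1)) :=
    fun x => ‖x‖⁻¹ • x with hr
  set T : Fin (n + 1) → Bool → EuclideanSpace ℝ (Fin n) → EuclideanSpace ℝ (Fin (n + 1)) :=
    fun i b y => (WithLp.equiv 2 (Fin (n + 1) → ℝ)).symm
      (i.insertNth (if b then 1 else -1) y) with hT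
  set B : Set (EuclideanSpace ℝ (Fin n)) := Metric.closedBall 0 (n + 1) with hB
  -- the cover
  have hcover : Metric.sphere (0 : EuclideanSpace ℝ (Fin (n + 1))) 1 ⊆
      ⋃ (i : Fin (n + 1)) (b : Bool), r '' (T i b '' B) := by
    intro x hx
    have hxn : ‖x‖ = 1 := by simpa using hx
    have hxsum : ∑ j, x j ^ 2 = 1 := by
      have := EuclideanSpace.norm_eq x
      rw [hxn] at this
      have h2 : Real.sqrt (∑ j, ‖x j‖ ^ 2) = 1 := this.symm
      have h3 : (∑ j, ‖x j‖ ^ 2) = 1 := Real.sqrt_eq_one.mp h2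
      simpa [Real.norm_eq_abs, sq_abs] using h3
    -- find a big coordinate
    have hex : ∃ i, (1 : ℝ) / (n + 1) ≤ |x i| := by
      by_contra hcon
      push_neg at hcon
      have hlt : ∑ j, x j ^ 2 < ∑ _j : Fin (n + 1), ((1 : ℝ) / (n + 1)) ^ 2 := by
        apply Finset.sum_lt_sum_of_nonempty (by simp)
        intro j _
        calc x j ^ 2 = |x j| ^ 2 := (sq_abs _).symm
          _ < ((1 : ℝ) / (n + 1)) ^ 2 := by
              apply pow_lt_pow_left₀ (hcon j) (abs_nonneg _)
              norm_num
      rw [hxsum] at hlt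
      simp only [Finset.sum_const, Finset.card_univ, Fintype.card_fin, nsmul_eq_mul] at hlt
      have hn1 : (0 : ℝ) < (n : ℝ) + 1 := by positivity
      rw [div_pow, one_pow] at hlt
      have : ((n : ℝ) + 1) * (1 / ((n : ℝ) + 1) ^ 2) = 1 / ((n : ℝ) + 1) := by
        field_simp
      rw [show ((n + 1 : ℕ) : ℝ) = (n : ℝ) + 1 by push_cast; ring, this] at hlt
      have : (1 : ℝ) / ((n : ℝ) + 1) ≤ 1 := by
        rw [div_le_one hn1]; linarith
      linarith
    obtain ⟨i, hi⟩ := hex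
    have hn1 : (0 : ℝ) < (n : ℝ) + 1 := by positivity
    have ht0 : 0 < |x i| := lt_of_lt_of_le (by positivity) hi
    set t := x i with htdef
    set b : Bool := decide (0 ≤ t) with hbdef
    set y : EuclideanSpace ℝ (Fin n) := WithLp.toLp 2 (fun k => |t|⁻¹ * x (i.succAbove k)) with hy
    have hvy : T i b y = |t|⁻¹ • x := by
      ext j
      refine Fin.succAboveCases i ?_ ?_ j
      · simp only [hT, WithLp.equiv_symm_apply, PiLp.toLp_apply, Fin.insertNth_apply_same, PiLp.smul_apply,
          smul_eq_mul]
        have htne : t ≠ 0 := by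
          intro h; rw [h] at ht0; simp at ht0
        by_cases hbt : 0 ≤ t
        · rw [if_pos (by simp [hbdef, hbt]), abs_of_nonneg hbt, ← htdef,
            inv_mul_cancel₀ htne]
        · rw [if_neg (by simp [hbdef, hbt]), abs_of_neg (lt_of_not_ge hbt), ← htdef]
          field_simp
      · intro k
        simp [hT, WithLp.equiv_symm_apply, PiLp.toLp_apply, Fin.insertNth_apply_succAbove, hy,
          PiLp.smul_apply, smul_eq_mul]
    have hyB : y ∈ B := by
      rw [hB, Metric.mem_closedBall, dist_zero_right]
      have h1 : ‖y‖ ≤ ‖(|t|⁻¹ • x : EuclideanSpace ℝ (Fin (n + 1)))‖ := by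
        rw [EuclideanSpace.norm_eq, EuclideanSpace.norm_eq]
        apply Real.sqrt_le_sqrt
        rw [Fin.sum_univ_succAbove (fun j => ‖(|t|⁻¹ • x : EuclideanSpace ℝ (Fin (n+1))) j‖ ^ 2) i]
        apply le_add_of_nonneg_left (sq_nonneg _) |>.trans
        apply le_of_eq
        congr 1
      have h2 : ‖(|t|⁻¹ • x : EuclideanSpace ℝ (Fin (n + 1)))‖ = |t|⁻¹ := by
        rw [norm_smul, hxn, mul_one, Real.norm_eq_abs, abs_inv, abs_abs]
      rw [h2] at h1
      refine h1.trans ?_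
      rw [inv_le_comm₀ ht0 hn1]
      simpa [one_div] using hi
    have hrx : r (T i b y) = x := by
      rw [hvy, hr]
      have hnv : ‖(|t|⁻¹ • x : EuclideanSpace ℝ (Fin (n + 1)))‖ = |t|⁻¹ := by
        rw [norm_smul, hxn, mul_one, Real.norm_eq_abs, abs_inv, abs_abs]
      simp only [hnv, inv_inv, smul_smul]
      rw [mul_inv_cancel₀ (ne_of_gt ht0), one_smul]
    refine Set.mem_iUnion.mpr ⟨i, Set.mem_iUnion.mpr ⟨b, ⟨T i b y, ⟨y, hyB, rfl⟩, hrx⟩⟩⟩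
  -- measure estimate
  refine lt_of_le_of_lt (measure_mono hcover) ?_
  refine lt_of_le_of_lt (measure_iUnion_le _) ?_
  rw [tsum_fintype]
  apply ENNReal.sum_lt_top.mpr
  intro i _
  refine lt_of_le_of_lt (measure_iUnion_le _) ?_
  rw [tsum_fintype]
  apply ENNReal.sum_lt_top.mpr
  intro b _
  have hTB_sub : T i b '' B ⊆ {x : EuclideanSpace ℝ (Fin (n + 1)) | 1 ≤ ‖x‖} := by
    rintro _ ⟨y, -, rfl⟩
    have h := euclidean_abs_coord_le_norm (T i b y) i
    simp only [hT, WithLp.equiv_symm_apply, PiLp.toLp_apply, Fin.insertNth_apply_same] at h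
    rcases b with _ | _ <;> simpa [hT] using h
  have hlip : LipschitzOnWith 2 r (T i b '' B) := normalize_lipschitzOnWith.mono hTB_sub
  have h1 := hlip.hausdorffMeasure_image_le (d := (n : ℝ)) (by positivity)
  refine lt_of_le_of_lt h1 ?_
  apply ENNReal.mul_lt_top
  · exact ENNReal.rpow_lt_top_of_nonneg (by positivity) (by simp)
  · have h2 := ((insertNth_isometry n i (if b then 1 else -1)).lipschitz).hausdorffMeasure_image_le
      (d := (n : ℝ)) (by positivity) B
    refine lt_of_le_of_lt h2 ?_
    apply ENNReal.mul_lt_top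
    · exact ENNReal.rpow_lt_top_of_nonneg (by positivity) (by simp)
    · exact hausdorff_closedBall_lt_top n _

/-- Let `n ≥ 2`, `𝒩 ⊆ ℝᵐ` nonempty compact, `K : Sⁿ → [0,∞)` with `∫ K dσ = 1` and
`K ∈ L^{n/(n-1)}(Sⁿ)`, and `Φ : Sⁿ → ℝᵐ` σ-measurable with `Φ ∈ 𝒩` σ-a.e.  Then
`dist(∫ K Φ dσ, 𝒩) ≤ ‖K‖²_{L^{n/(n-1)}} (∫∫ |Φ(ξ) − Φ(ζ)|ⁿ dσ dσ)^{1/n}`. -/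
theorem dist_of_average_le_holder (n m : ℕ) (hn : 2 ≤ n) (hm : 1 ≤ m)
    (𝒩 : Set (EuclideanSpace ℝ (Fin m))) (h𝒩ne : 𝒩.Nonempty) (h𝒩c : IsCompact 𝒩)
    (K : EuclideanSpace ℝ (Fin (n + 1)) → ℝ)
    (Φ : EuclideanSpace ℝ (Fin (n + 1)) → EuclideanSpace ℝ (Fin m))
    (hK0 : ∀ ξ ∈ Metric.sphere (0 : EuclideanSpace ℝ (Fin (n + 1))) 1, 0 ≤ K ξ)
    (hKint : IntegrableOn K (Metric.sphere (0 : EuclideanSpace ℝ (Fin (n + 1))) 1) μH[(n : ℝ)])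
    (hK1 : (∫ ξ in Metric.sphere (0 : EuclideanSpace ℝ (Fin (n + 1))) 1, K ξ ∂μH[(n : ℝ)]) = 1)
    (hKq : IntegrableOn (fun ξ => K ξ ^ ((n : ℝ) / ((n : ℝ) - 1)))
      (Metric.sphere (0 : EuclideanSpace ℝ (Fin (n + 1))) 1) μH[(n : ℝ)])
    (hΦm : AEStronglyMeasurable Φ
      (μH[(n : ℝ)].restrict (Metric.sphere (0 : EuclideanSpace ℝ (Fin (n + 1))) 1)))
    (hΦ𝒩 : ∀ᵐ ξ ∂(μH[(n : ℝ)].restrict (Metric.sphere (0 : EuclideanSpace ℝ (Fin (n + 1))) 1)),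
      Φ ξ ∈ 𝒩) :
    Metric.infDist
        (∫ ξ in Metric.sphere (0 : EuclideanSpace ℝ (Fin (n + 1))) 1, K ξ • Φ ξ ∂μH[(n : ℝ)]) 𝒩
      ≤ ((∫ ξ in Metric.sphere (0 : EuclideanSpace ℝ (Fin (n + 1))) 1,
            K ξ ^ ((n : ℝ) / ((n : ℝ) - 1)) ∂μH[(n : ℝ)]) ^ (((n : ℝ) - 1) / (n : ℝ))) ^ 2
        * (∫ ξ in Metric.sphere (0 : EuclideanSpace ℝ (Fin (n + 1))) 1,
            ∫ ζ in Metric.sphere (0 : EuclideanSpace ℝ (Fin (n + 1))) 1,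
              ‖Φ ξ - Φ ζ‖ ^ n ∂μH[(n : ℝ)] ∂μH[(n : ℝ)]) ^ (1 / (n : ℝ)) := by
  classical
  set S : Set (EuclideanSpace ℝ (Fin (n + 1))) :=
    Metric.sphere (0 : EuclideanSpace ℝ (Fin (n + 1))) 1 with hS
  set μ : Measure (EuclideanSpace ℝ (Fin (n + 1))) := μH[(n : ℝ)].restrict S with hμ
  haveI hfin : IsFiniteMeasure μ := by
    constructor
    rw [hμ, Measure.restrict_apply_univ]
    exact hausdorff_sphere_lt_top n
  have hn1 : (1 : ℝ) < (n : ℝ) := by exact_mod_cast (by omega : 1 < n)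
  have hnpos : (0 : ℝ) < (n : ℝ) := by linarith
  have hpq : ((n : ℝ) / ((n : ℝ) - 1)).HolderConjugate (n : ℝ) := by
    exact ((Real.holderConjugate_iff_eq_conjExponent hn1).mpr rfl).symm
  have hq0 : (0 : ℝ) < (n : ℝ) / ((n : ℝ) - 1) := hpq.pos
  have hSm : MeasurableSet S := Metric.isClosed_sphere.measurableSet
  have hKae : 0 ≤ᵐ[μ] K := by
    filter_upwards [ae_restrict_mem (μ := μH[(n : ℝ)]) hSm] with ξ hξ
    exact hK0 ξ hξ
  have hKint' : Integrable K μ := hKint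
  have hKq' : Integrable (fun ξ => K ξ ^ ((n : ℝ) / ((n : ℝ) - 1))) μ := hKq
  have hKAESM : AEStronglyMeasurable K μ := hKint'.aestronglyMeasurable
  have hKmem : MemLp K (ENNReal.ofReal ((n : ℝ) / ((n : ℝ) - 1))) μ := by
    have hint : Integrable (fun ξ => ‖K ξ‖ ^ ((n : ℝ) / ((n : ℝ) - 1))) μ := by
      apply hKq'.congr
      filter_upwards [hKae] with ξ hξ
      rw [Real.norm_eq_abs, abs_of_nonneg hξ]
    have hne0 : (ENNReal.ofReal ((n : ℝ) / ((n : ℝ) - 1))) ≠ 0 := by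
      simp [ENNReal.ofReal_eq_zero, not_le, hq0]
    have hiff := memLp_norm_rpow_iff (p := ENNReal.ofReal ((n : ℝ) / ((n : ℝ) - 1)))
      (q := ENNReal.ofReal ((n : ℝ) / ((n : ℝ) - 1))) hKAESM hne0 ENNReal.ofReal_ne_top
    apply hiff.mp
    rw [ENNReal.div_self hne0 ENNReal.ofReal_ne_top, memLp_one_iff_integrable]
    apply hint.congr
    filter_upwards with ξ
    rw [ENNReal.toReal_ofReal hq0.le]
  obtain ⟨C, hC0, hC⟩ : ∃ C : ℝ, 0 ≤ C ∧ ∀ y ∈ 𝒩, ‖y‖ ≤ C := by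
    obtain ⟨R, hR⟩ := h𝒩c.isBounded.subset_closedBall 0
    refine ⟨max R 0, le_max_right _ _, fun y hy => ?_⟩
    have h1 := hR hy
    rw [Metric.mem_closedBall, dist_zero_right] at h1
    exact h1.trans (le_max_left _ _)
  have hΦC : ∀ᵐ ξ ∂μ, ‖Φ ξ‖ ≤ C := by
    filter_upwards [hΦ𝒩] with ξ hξ using hC _ hξ
  set H : EuclideanSpace ℝ (Fin m) → ℝ := fun y => ∫ ξ, ‖Φ ξ - y‖ ^ n ∂μ with hH
  have hsubAESM : ∀ y : EuclideanSpace ℝ (Fin m),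
      AEStronglyMeasurable (fun ξ => ‖Φ ξ - y‖ ^ n) μ := fun y =>
    (continuous_pow n).comp_aestronglyMeasurable (hΦm.sub aestronglyMeasurable_const).norm
  have hH0 : ∀ y, 0 ≤ H y := fun y => integral_nonneg fun ξ => by positivity
  have hHcont : Continuous H := by
    rw [continuous_iff_continuousAt]
    intro y₀
    apply continuousAt_of_dominated (bound := fun _ => (C + ‖y₀‖ + 1) ^ n)
    · exact Filter.Eventually.of_forall fun y => hsubAESM y
    · filter_upwards [Metric.ball_mem_nhds y₀ one_pos] with y hy
      filter_upwards [hΦC] with ξ hξ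
      rw [Real.norm_eq_abs, abs_of_nonneg (by positivity)]
      apply pow_le_pow_left₀ (norm_nonneg _)
      have h1 : ‖y‖ - ‖y₀‖ ≤ ‖y - y₀‖ := norm_sub_norm_le y y₀
      have h2 : ‖y - y₀‖ < 1 := mem_ball_iff_norm.mp hy
      have h3 := norm_sub_le (Φ ξ) y
      linarith
    · exact integrable_const _
    · exact Filter.Eventually.of_forall fun ξ =>
        (((continuous_const.sub continuous_id).norm).pow n).continuousAt
  have key : ∀ y : EuclideanSpace ℝ (Fin m),
      (∫ ξ, K ξ * ‖Φ ξ - y‖ ∂μ) ≤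
        (∫ ξ, K ξ ^ ((n : ℝ) / ((n : ℝ) - 1)) ∂μ) ^ (((n : ℝ) - 1) / (n : ℝ))
          * H y ^ (1 / (n : ℝ)) := by
    intro y
    have hgmem : MemLp (fun ξ => ‖Φ ξ - y‖) (ENNReal.ofReal (n : ℝ)) μ := by
      apply MemLp.of_bound (hΦm.sub aestronglyMeasurable_const).norm (C + ‖y‖)
      filter_upwards [hΦC] with ξ hξ
      rw [norm_norm]
      exact (norm_sub_le _ _).trans (by linarith)
    have h := integral_mul_le_Lp_mul_Lq_of_nonneg hpq hKae
      (Filter.Eventually.of_forall fun ξ => norm_nonneg _) hKmem hgmem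
    have hrw : (∫ ξ, ‖Φ ξ - y‖ ^ ((n : ℝ)) ∂μ) = H y := by
      simp only [hH]
      apply integral_congr_ae
      filter_upwards with ξ
      rw [Real.rpow_natCast]
    rw [hrw, one_div_div] at h
    exact h
  set A : ℝ := (∫ ξ, K ξ ^ ((n : ℝ) / ((n : ℝ) - 1)) ∂μ) ^ (((n : ℝ) - 1) / (n : ℝ)) with hA
  have hA0 : 0 ≤ A := Real.rpow_nonneg
    (integral_nonneg_of_ae (hKae.mono fun ξ h => Real.rpow_nonneg h _)) _
  have hIint : Integrable (fun ξ => K ξ • Φ ξ) μ := by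
    apply Integrable.mono' (hKint'.abs.mul_const C) (hKAESM.smul hΦm)
    filter_upwards [hΦC] with ξ hξ
    rw [Pi.smul_apply', norm_smul, Real.norm_eq_abs]
    exact mul_le_mul_of_nonneg_left hξ (abs_nonneg _)
  set I : EuclideanSpace ℝ (Fin m) := ∫ ξ, K ξ • Φ ξ ∂μ with hI
  have hstep1 : ∀ᵐ ζ ∂μ, Metric.infDist I 𝒩 ≤ ∫ ξ, K ξ * ‖Φ ξ - Φ ζ‖ ∂μ := by
    filter_upwards [hΦ𝒩] with ζ hζ
    have h2 : I - Φ ζ = ∫ ξ, K ξ • (Φ ξ - Φ ζ) ∂μ := by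
      have he : (fun ξ => K ξ • (Φ ξ - Φ ζ)) = fun ξ => K ξ • Φ ξ - K ξ • Φ ζ := by
        funext ξ; rw [smul_sub]
      rw [he, integral_sub hIint (hKint'.smul_const _), integral_smul_const, hK1, one_smul]
    calc Metric.infDist I 𝒩 ≤ dist I (Φ ζ) := Metric.infDist_le_dist_of_mem hζ
      _ = ‖I - Φ ζ‖ := dist_eq_norm _ _
      _ = ‖∫ ξ, K ξ • (Φ ξ - Φ ζ) ∂μ‖ := by rw [h2]
      _ ≤ ∫ ξ, ‖K ξ • (Φ ξ - Φ ζ)‖ ∂μ := norm_integral_le_integral_norm _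
      _ = ∫ ξ, K ξ * ‖Φ ξ - Φ ζ‖ ∂μ := by
          apply integral_congr_ae
          filter_upwards [hKae] with ξ hξ
          rw [norm_smul, Real.norm_eq_abs, abs_of_nonneg hξ]
  have hstep2 : ∀ᵐ ζ ∂μ, Metric.infDist I 𝒩 ≤ A * H (Φ ζ) ^ (1 / (n : ℝ)) := by
    filter_upwards [hstep1] with ζ h using h.trans (key (Φ ζ))
  have hHbound : ∀ᵐ ζ ∂μ, H (Φ ζ) ≤ (C + C) ^ n * (μ Set.univ).toReal := by
    filter_upwards [hΦC] with ζ hζ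
    have h1 : H (Φ ζ) ≤ ∫ _ξ, (C + C) ^ n ∂μ := by
      apply integral_mono_of_nonneg (Filter.Eventually.of_forall fun ξ => by positivity)
        (integrable_const _)
      filter_upwards [hΦC] with ξ hξ
      exact pow_le_pow_left₀ (norm_nonneg _) ((norm_sub_le _ _).trans (by linarith)) n
    rw [integral_const, smul_eq_mul, mul_comm] at h1
    exact h1
  have hHΦaesm : AEStronglyMeasurable (fun ζ => H (Φ ζ) ^ ((1 : ℝ) / (n : ℝ))) μ :=
    (Real.continuous_rpow_const (by positivity)).comp_aestronglyMeasurable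
      (hHcont.comp_aestronglyMeasurable hΦm)
  have hgmem2 : MemLp (fun ζ => H (Φ ζ) ^ ((1 : ℝ) / (n : ℝ))) (ENNReal.ofReal (n : ℝ)) μ := by
    apply MemLp.of_bound hHΦaesm
      (((C + C) ^ n * (μ Set.univ).toReal + 1) ^ ((1 : ℝ) / (n : ℝ)))
    filter_upwards [hHbound] with ζ hζ
    rw [Real.norm_eq_abs, abs_of_nonneg (Real.rpow_nonneg (hH0 _) _)]
    exact Real.rpow_le_rpow (hH0 _) (by linarith) (by positivity)
  have hHolder2 : (∫ ζ, K ζ * H (Φ ζ) ^ ((1 : ℝ) / (n : ℝ)) ∂μ) ≤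
      A * (∫ ζ, H (Φ ζ) ∂μ) ^ (1 / (n : ℝ)) := by
    have h := integral_mul_le_Lp_mul_Lq_of_nonneg hpq hKae
      (Filter.Eventually.of_forall fun ζ => Real.rpow_nonneg (hH0 _) _) hKmem hgmem2
    have hg : (∫ ζ, (H (Φ ζ) ^ ((1 : ℝ) / (n : ℝ))) ^ ((n : ℝ)) ∂μ) = ∫ ζ, H (Φ ζ) ∂μ := by
      apply integral_congr_ae
      filter_upwards with ζ
      rw [← Real.rpow_mul (hH0 _), one_div, inv_mul_cancel₀ hnpos.ne', Real.rpow_one]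
    rw [hg, one_div_div] at h
    rw [hA]
    exact h
  have hg2int : Integrable (fun ζ => K ζ * (A * H (Φ ζ) ^ ((1 : ℝ) / (n : ℝ)))) μ := by
    apply Integrable.mono' (hKint'.abs.mul_const
      (|A| * ((C + C) ^ n * (μ Set.univ).toReal + 1) ^ ((1 : ℝ) / (n : ℝ))))
      (hKAESM.mul (aestronglyMeasurable_const.mul hHΦaesm))
    filter_upwards [hHbound] with ζ hζ
    simp only [Pi.mul_apply, Real.norm_eq_abs, abs_mul]
    have hb : |H (Φ ζ) ^ ((1 : ℝ) / (n : ℝ))| ≤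
        ((C + C) ^ n * (μ Set.univ).toReal + 1) ^ ((1 : ℝ) / (n : ℝ)) := by
      rw [abs_of_nonneg (Real.rpow_nonneg (hH0 _) _)]
      exact Real.rpow_le_rpow (hH0 _) (by linarith) (by positivity)
    exact mul_le_mul_of_nonneg_left (mul_le_mul_of_nonneg_left hb (abs_nonneg A)) (abs_nonneg _)
  have hmain : Metric.infDist I 𝒩 = ∫ ζ, K ζ * Metric.infDist I 𝒩 ∂μ := by
    rw [integral_mul_const, hK1, one_mul]
  have hfinal : Metric.infDist I 𝒩 ≤ A * (A * (∫ ζ, H (Φ ζ) ∂μ) ^ (1 / (n : ℝ))) := by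
    rw [hmain]
    have hstep3 : (∫ ζ, K ζ * Metric.infDist I 𝒩 ∂μ) ≤
        ∫ ζ, K ζ * (A * H (Φ ζ) ^ ((1 : ℝ) / (n : ℝ))) ∂μ := by
      apply integral_mono_ae (hKint'.mul_const _) hg2int
      filter_upwards [hstep2, hKae] with ζ h hK
      exact mul_le_mul_of_nonneg_left h hK
    refine hstep3.trans ?_
    have he : (fun ζ => K ζ * (A * H (Φ ζ) ^ ((1 : ℝ) / (n : ℝ)))) =
        fun ζ => A * (K ζ * H (Φ ζ) ^ ((1 : ℝ) / (n : ℝ))) := by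
      funext ζ; ring
    rw [he, integral_const_mul]
    exact mul_le_mul_of_nonneg_left hHolder2 hA0
  have hD : (∫ ζ, H (Φ ζ) ∂μ) = ∫ ξ, ∫ ζ, ‖Φ ξ - Φ ζ‖ ^ n ∂μ ∂μ := by
    apply integral_congr_ae
    filter_upwards with a
    simp only [hH]
    apply integral_congr_ae
    filter_upwards with b
    rw [norm_sub_rev]
  rw [hD] at hfinal
  refine hfinal.trans_eq ?_
  ring
end

section
/- Let n ≥ 2 and m ≥ 1 be integers and let ω : ℝ^n → ℝ^m be continuously differentiable. Let κ : ℝ^n \ {0} → ℝ^n be the inversion κ(x) = x/|x|². Then ∫_{B(0,1) \ {0}} ‖D(ω∘κ)(x)‖^n dx = ∫_{{y ∈ ℝ^n : |y| > 1}} ‖Dω(y)‖^n dy, where both sides are integrals of nonnegative functions with values in [0, ∞] and they are equal (in particular, one is finite if and only if the other is). -/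
open MeasureTheory Metric

section Aux

open EuclideanGeometry

variable {E : Type*} [NormedAddCommGroup E] [InnerProductSpace ℝ E]

theorem aux_kappa_eq : (fun y : E => (‖y‖ ^ 2)⁻¹ • y) = inversion (0 : E) 1 := by
  funext y
  simp [inversion_def, dist_zero_right, one_div, inv_pow]

theorem aux_norm_kappa (y : E) : ‖(‖y‖ ^ 2)⁻¹ • y‖ = ‖y‖⁻¹ := by
  have h := dist_inversion_center (0 : E) y 1
  rw [← aux_kappa_eq] at h
  simpa [dist_zero_right, one_div] using h

theorem aux_kappa_kappa {y : E} (hy : y ≠ 0) :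
    (‖(‖y‖ ^ 2)⁻¹ • y‖ ^ 2)⁻¹ • ((‖y‖ ^ 2)⁻¹ • y) = y := by
  have h := inversion_inversion (0 : E) (one_ne_zero (α := ℝ)) y
  rw [← aux_kappa_eq] at h
  simpa using h

theorem aux_hasFDerivAt [CompleteSpace E] {x : E} (hx : x ≠ 0) :
    HasFDerivAt (fun y : E => (‖y‖ ^ 2)⁻¹ • y)
      ((‖x‖ ^ 2)⁻¹ • ((Submodule.reflection (ℝ ∙ x)ᗮ : E ≃ₗᵢ[ℝ] E) : E →L[ℝ] E)) x := by
  have h := hasFDerivAt_inversion (c := (0 : E)) (R := 1) hx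
  rw [← aux_kappa_eq] at h
  simpa [dist_zero_right, one_div, inv_pow] using h

theorem aux_abs_det_reflection [CompleteSpace E] [FiniteDimensional ℝ E] (K : Submodule ℝ E)
    [Submodule.HasOrthogonalProjection K] :
    |(((Submodule.reflection K : E ≃ₗᵢ[ℝ] E) : E →L[ℝ] E)).det| = 1 := by
  set L : E →ₗ[ℝ] E := (((Submodule.reflection K : E ≃ₗᵢ[ℝ] E) : E →L[ℝ] E) : E →ₗ[ℝ] E)
  have hLL : L ∘ₗ L = LinearMap.id := by
    apply LinearMap.ext
    intro y
    simpa [L] using Submodule.reflection_reflection K y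
  have hdet : LinearMap.det L * LinearMap.det L = 1 := by
    rw [← LinearMap.det_comp, hLL, LinearMap.det_id]
  have habs := abs_nonneg (LinearMap.det L)
  nlinarith [sq_abs (LinearMap.det L)]

theorem aux_opNorm_comp_reflection [CompleteSpace E] {F : Type*} [NormedAddCommGroup F]
    [NormedSpace ℝ F] (A : E →L[ℝ] F) (K : Submodule ℝ E) [Submodule.HasOrthogonalProjection K] :
    ‖A.comp ((Submodule.reflection K : E ≃ₗᵢ[ℝ] E) : E →L[ℝ] E)‖ = ‖A‖ := by
  have h := A.opNorm_comp_linearIsometryEquiv (Submodule.reflection K : E ≃ₗᵢ[ℝ] E)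
  convert h using 2

end Aux

/-- Conformal invariance of the `n`-energy under the inversion `κ(x) = x/|x|²`: for a `C¹`
map `ω : ℝⁿ → ℝᵐ`,
`∫_{B(0,1)\{0}} ‖D(ω∘κ)‖ⁿ = ∫_{|y|>1} ‖Dω‖ⁿ` as integrals with values in `[0,∞]`. -/
theorem inversion_energy_invariance (n m : ℕ) (hn : 2 ≤ n) (hm : 1 ≤ m)
    (ω : EuclideanSpace ℝ (Fin n) → EuclideanSpace ℝ (Fin m))
    (hω : ContDiff ℝ 1 ω) :
    (∫⁻ x in ball (0 : EuclideanSpace ℝ (Fin n)) 1 \ {0},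
        ENNReal.ofReal (‖fderiv ℝ (fun y => ω ((‖y‖ ^ 2)⁻¹ • y)) x‖ ^ n))
      = ∫⁻ y in {y : EuclideanSpace ℝ (Fin n) | 1 < ‖y‖},
        ENNReal.ofReal (‖fderiv ℝ ω y‖ ^ n) := by
  set κ : EuclideanSpace ℝ (Fin n) → EuclideanSpace ℝ (Fin n) := fun y => (‖y‖ ^ 2)⁻¹ • y with hκ
  set s : Set (EuclideanSpace ℝ (Fin n)) := ball 0 1 \ {0} with hs_def
  have hs : MeasurableSet s := measurableSet_ball.diff (measurableSet_singleton 0)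
  have hmem : ∀ x ∈ s, x ≠ 0 ∧ ‖x‖ < 1 := by
    intro x hx
    exact ⟨hx.2, mem_ball_zero_iff.1 hx.1⟩
  set f' : EuclideanSpace ℝ (Fin n) → EuclideanSpace ℝ (Fin n) →L[ℝ] EuclideanSpace ℝ (Fin n) :=
    fun x => (‖x‖ ^ 2)⁻¹ •
      (((Submodule.reflection (ℝ ∙ x)ᗮ : EuclideanSpace ℝ (Fin n) ≃ₗᵢ[ℝ] EuclideanSpace ℝ (Fin n))) :
        EuclideanSpace ℝ (Fin n) →L[ℝ] EuclideanSpace ℝ (Fin n)) with hf'_def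
  have hf' : ∀ x ∈ s, HasFDerivWithinAt κ (f' x) s x := fun x hx =>
    (aux_hasFDerivAt (hmem x hx).1).hasFDerivWithinAt
  have hinj : Set.InjOn κ s := by
    intro a ha b hb hab
    have h1 : κ (κ a) = a := aux_kappa_kappa (hmem a ha).1
    have h2 : κ (κ b) = b := aux_kappa_kappa (hmem b hb).1
    rw [hab, h2] at h1
    exact h1.symm
  have himg : κ '' s = {y : EuclideanSpace ℝ (Fin n) | 1 < ‖y‖} := by
    ext y
    constructor
    · rintro ⟨x, hx, rfl⟩
      have h1 := (hmem x hx).1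
      have h2 := (hmem x hx).2
      have : ‖κ x‖ = ‖x‖⁻¹ := aux_norm_kappa x
      simp only [Set.mem_setOf_eq, this]
      exact (one_lt_inv₀ (norm_pos_iff.2 h1)).2 h2
    · intro hy
      have hy1 : 1 < ‖y‖ := hy
      have hy0 : y ≠ 0 := by
        intro h; rw [h, norm_zero] at hy1; linarith
      have hκκ : κ (κ y) = y := aux_kappa_kappa hy0
      refine ⟨κ y, ?_, hκκ⟩
      have hnκ : ‖κ y‖ = ‖y‖⁻¹ := aux_norm_kappa y
      constructor
      · rw [mem_ball_zero_iff, hnκ]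
        exact inv_lt_one_of_one_lt₀ hy1
      · simp only [Set.mem_singleton_iff]
        intro h
        rw [h, norm_zero] at hnκ
        have h2 : ‖y‖ = 0 := inv_eq_zero.1 hnκ.symm
        linarith
  rw [← himg, lintegral_image_eq_lintegral_abs_det_fderiv_mul volume hs hf' hinj]
  apply setLIntegral_congr_fun hs
  intro x hx
  beta_reduce
  have hx0 : x ≠ 0 := (hmem x hx).1
  have hnx : ‖x‖ ≠ 0 := norm_ne_zero_iff.2 hx0
  have hxpos : (0 : ℝ) < (‖x‖ ^ 2)⁻¹ := by positivity
  have hchain : HasFDerivAt (fun y => ω ((‖y‖ ^ 2)⁻¹ • y))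
      ((fderiv ℝ ω (κ x)).comp (f' x)) x := by
    exact (hω.differentiable one_ne_zero (κ x)).hasFDerivAt.comp x (aux_hasFDerivAt hx0)
  rw [hchain.fderiv]
  have hnorm : ‖(fderiv ℝ ω (κ x)).comp (f' x)‖ = (‖x‖ ^ 2)⁻¹ * ‖fderiv ℝ ω (κ x)‖ := by
    have hrw : (fderiv ℝ ω (κ x)).comp (f' x)
        = (‖x‖ ^ 2)⁻¹ • ((fderiv ℝ ω (κ x)).comp
          (((Submodule.reflection (ℝ ∙ x)ᗮ : EuclideanSpace ℝ (Fin n) ≃ₗᵢ[ℝ] EuclideanSpace ℝ (Fin n))) :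
            EuclideanSpace ℝ (Fin n) →L[ℝ] EuclideanSpace ℝ (Fin n))) :=
      ContinuousLinearMap.comp_smul _ _ _
    rw [hrw]
    have h2 := norm_smul ((‖x‖ ^ 2)⁻¹) ((fderiv ℝ ω (κ x)).comp
      (((Submodule.reflection (ℝ ∙ x)ᗮ : EuclideanSpace ℝ (Fin n) ≃ₗᵢ[ℝ] EuclideanSpace ℝ (Fin n))) :
        EuclideanSpace ℝ (Fin n) →L[ℝ] EuclideanSpace ℝ (Fin n)))
    rw [h2, Real.norm_eq_abs, abs_of_pos hxpos, aux_opNorm_comp_reflection]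
  have hdet : |(f' x).det| = ((‖x‖ ^ 2)⁻¹) ^ n := by
    have hcoe : ((f' x : EuclideanSpace ℝ (Fin n) →L[ℝ] EuclideanSpace ℝ (Fin n)) :
        EuclideanSpace ℝ (Fin n) →ₗ[ℝ] EuclideanSpace ℝ (Fin n))
        = (‖x‖ ^ 2)⁻¹ • ((((Submodule.reflection (ℝ ∙ x)ᗮ :
            EuclideanSpace ℝ (Fin n) ≃ₗᵢ[ℝ] EuclideanSpace ℝ (Fin n))) :
          EuclideanSpace ℝ (Fin n) →L[ℝ] EuclideanSpace ℝ (Fin n)) :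
          EuclideanSpace ℝ (Fin n) →ₗ[ℝ] EuclideanSpace ℝ (Fin n)) := by
      rw [hf'_def]
      rfl
    rw [ContinuousLinearMap.det, hcoe, LinearMap.det_smul, abs_mul, abs_pow,
      abs_of_pos hxpos, finrank_euclideanSpace_fin]
    have h1 := aux_abs_det_reflection (E := EuclideanSpace ℝ (Fin n)) (ℝ ∙ x)ᗮ
    rw [ContinuousLinearMap.det] at h1
    rw [h1, mul_one]
  rw [hnorm, hdet, mul_pow, ENNReal.ofReal_mul (by positivity)]
end
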